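/- Every valid integral allocation that additionally satisfies category stability (CS) equals the serial dictatorship allocation x_σ for some choice order σ. -/

import Mathlib

open Finset

/-- An allocation instance: quotas, eligibility sets, and priority relations. -/
structure AllocInstance (A C : Type*) where
  quota : C → ℕ
  elig : C → Set A
  prio : C → A → A → Prop

namespace AllocInstance

variable {A C : Type*} [Fintype A] [Fintype C]

/-- Strict priority: `a ≻_c a'`. -/
def Strict (I : AllocInstance A C) (c : C) (a a' : A) : Prop :=
  I.prio c a a' ∧ ¬ I.prio c a' a

/-- The priority relation of each category is a total preorder on its eligible set. -/
def TotalPreorder (I : AllocInstance A C) : Prop :=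
  (∀ c, ∀ a ∈ I.elig c, I.prio c a a) ∧
  (∀ c, ∀ a ∈ I.elig c, ∀ a' ∈ I.elig c, ∀ a'' ∈ I.elig c,
      I.prio c a a' → I.prio c a' a'' → I.prio c a a'') ∧
  (∀ c, ∀ a ∈ I.elig c, ∀ a' ∈ I.elig c, I.prio c a a' ∨ I.prio c a' a)

/-- The priority relation of each category is a (strict) total order on its eligible
set, i.e. an antisymmetric total preorder. -/
def StrictTotalPrio (I : AllocInstance A C) : Prop :=
  I.TotalPreorder ∧
  (∀ c, ∀ a ∈ I.elig c, ∀ a' ∈ I.elig c, I.prio c a a' → I.prio c a' a → a = a')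

/-- A feasible allocation: nonnegative, eligibility (ER), quotas (QR), unit demand. -/
def Feasible (I : AllocInstance A C) (x : A → C → ℝ) : Prop :=
  (∀ a c, 0 ≤ x a c) ∧
  (∀ a c, a ∉ I.elig c → x a c = 0) ∧
  (∀ c, ∑ a, x a c ≤ (I.quota c : ℝ)) ∧
  (∀ a, ∑ c, x a c ≤ 1)

/-- The size of an allocation. -/
def V (_I : AllocInstance A C) (x : A → C → ℝ) : ℝ := ∑ a, ∑ c, x a c

/-- Respect for priorities (PR). -/
def PR (I : AllocInstance A C) (x : A → C → ℝ) : Prop :=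
  ∀ c, ∀ a ∈ I.elig c, ∀ a' ∈ I.elig c,
    I.Strict c a' a → 0 < x a c → ∑ c', x a' c' = 1

/-- Pareto efficiency (PE). -/
def PE (I : AllocInstance A C) (x : A → C → ℝ) : Prop :=
  ¬ ∃ y, I.Feasible y ∧ I.PR y ∧
    (∀ a, ∑ c, x a c ≤ ∑ c, y a c) ∧ (∃ a, ∑ c, x a c < ∑ c, y a c)

/-- A valid allocation: feasible, respecting priorities, and Pareto efficient. -/
def Valid (I : AllocInstance A C) (x : A → C → ℝ) : Prop :=
  I.Feasible x ∧ I.PR x ∧ I.PE x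

/-- An integral allocation. -/
def Integral (_I : AllocInstance A C) (x : A → C → ℝ) : Prop :=
  ∀ a c, x a c = 0 ∨ x a c = 1

/-- A valid perturbation profile: positivity, small effect, consistency. -/
def ValidPerturbation (I : AllocInstance A C) (δ : A → C → ℝ) : Prop :=
  (∀ a c, 0 < δ a c) ∧
  (∑ a, ∑ c, δ a c ≤ 1 / 2) ∧
  (∀ c, ∀ a ∈ I.elig c, ∀ a' ∈ I.elig c, (I.prio c a a' ↔ δ a' c ≥ δ a c))

/-- The perturbed objective `V_δ`. -/
def Vd (_I : AllocInstance A C) (δ x : A → C → ℝ) : ℝ :=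
  ∑ a, ∑ c, x a c * (1 - δ a c)

/-- Category stability (CS): no cyclic trade among categories in which some category
passes its allocation to a strictly higher-priority agent. -/
def CS (I : AllocInstance A C) (x : A → C → ℝ) : Prop :=
  ¬ ∃ (j : ℕ) (c : ℕ → C) (a : ℕ → A),
      2 ≤ j ∧ c j = c 0 ∧ a j = a 0 ∧
      (∀ i < j, 0 < x (a i) (c i) ∧ I.prio (c i) (a (i + 1)) (a i)) ∧
      (∃ i < j, I.Strict (c i) (a (i + 1)) (a i))

open Classical in
/-- One pass of serial dictatorship over a list of category entries: at each entry `c`,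
if there is a highest-priority eligible unallocated agent, allocate one unit to them. -/
noncomputable def sdRun (I : AllocInstance A C) : List C → (A → C → ℝ) → (A → C → ℝ)
  | [], x => x
  | c :: rest, x =>
    if h : ∃ a, (a ∈ I.elig c ∧ ∀ c', x a c' = 0) ∧
        (∀ a', a' ∈ I.elig c → (∀ c', x a' c' = 0) → I.prio c a a')
    then sdRun I rest (fun a' c' => if a' = h.choose ∧ c' = c then 1 else x a' c')
    else sdRun I rest x

/-- The serial dictatorship allocation `x_σ` for a choice order `σ`. -/
noncomputable def sdAlloc (I : AllocInstance A C) (σ : List C) : A → C → ℝ :=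
  I.sdRun σ (fun _ _ => 0)

end AllocInstance


namespace AllocInstance

section Aux

variable {A C : Type*} [Fintype A] [Fintype C] [DecidableEq C]

lemma sdRun_appnd (I : AllocInstance A C) (L1 L2 : List C) (s : A → C → ℝ) :
    I.sdRun (L1 ++ L2) s = I.sdRun L2 (I.sdRun L1 s) := by
  induction L1 generalizing s with
  | nil => rfl
  | cons c rest ih =>
    rw [List.cons_append, sdRun, sdRun]
    by_cases h : ∃ a, (a ∈ I.elig c ∧ ∀ c', s a c' = 0) ∧
        (∀ a', a' ∈ I.elig c → (∀ c', s a' c' = 0) → I.prio c a a')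
    · rw [dif_pos h, dif_pos h, ih]
    · rw [dif_neg h, dif_neg h, ih]

lemma sdRun_skip (I : AllocInstance A C) (L : List C) (s : A → C → ℝ)
    (h : ∀ c ∈ L, ¬ ∃ a, a ∈ I.elig c ∧ ∀ c', s a c' = 0) :
    I.sdRun L s = s := by
  induction L with
  | nil => rfl
  | cons c rest ih =>
    rw [sdRun, dif_neg, ih (fun c' hc' => h c' (List.mem_cons_of_mem _ hc'))]
    rintro ⟨a, ⟨ha, hz⟩, -⟩
    exact h c List.mem_cons_self ⟨a, ha, hz⟩

variable {I : AllocInstance A C} {x : A → C → ℝ}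

lemma row_zero_of_one (hfe : I.Feasible x) {a : A} {c c' : C} (h1 : x a c = 1)
    (hne : c' ≠ c) : x a c' = 0 := by
  classical
  have h2 : x a c + x a c' ≤ 1 := by
    calc x a c + x a c' = ∑ c'' ∈ ({c, c'} : Finset C), x a c'' :=
          (Finset.sum_pair hne.symm).symm
    _ ≤ ∑ c'', x a c'' := Finset.sum_le_sum_of_subset_of_nonneg
          (Finset.subset_univ _) (fun i _ _ => hfe.1 a i)
    _ ≤ 1 := hfe.2.2.2 a
  have h3 := hfe.1 a c'
  linarith

lemma row_cases (hfe : I.Feasible x) (hint : I.Integral x) (a : A) :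
    (∀ c, x a c = 0) ∨ (∃ c, x a c = 1 ∧ ∑ c', x a c' = 1) := by
  by_cases h : ∃ c, x a c = 1
  · obtain ⟨c, hc⟩ := h
    refine Or.inr ⟨c, hc, ?_⟩
    rw [Finset.sum_eq_single_of_mem c (Finset.mem_univ c)
      (fun b _ hb => row_zero_of_one hfe hc hb), hc]
  · exact Or.inl fun c => (hint a c).resolve_right (fun h1 => h ⟨c, h1⟩)

lemma exists_top (hord : I.StrictTotalPrio) (c : C) (t : Finset A) :
    (∀ a ∈ t, a ∈ I.elig c) → t.Nonempty → ∃ a ∈ t, ∀ b ∈ t, I.prio c a b := by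
  classical
  induction t using Finset.induction_on with
  | empty => intro _ hne; exact absurd hne (by simp)
  | @insert a s ha ih =>
    intro ht _
    have haE := ht a (Finset.mem_insert_self _ _)
    rcases s.eq_empty_or_nonempty with rfl | hs
    · refine ⟨a, Finset.mem_insert_self _ _, ?_⟩
      intro b hb
      rcases Finset.mem_insert.1 hb with rfl | hb
      · exact hord.1.1 c b haE
      · exact absurd hb (Finset.notMem_empty b)
    · obtain ⟨b, hb, hbtop⟩ := ih (fun y hy => ht y (Finset.mem_insert_of_mem hy)) hs
      have hbE := ht b (Finset.mem_insert_of_mem hb)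
      rcases hord.1.2.2 c a haE b hbE with h | h
      · refine ⟨a, Finset.mem_insert_self _ _, ?_⟩
        intro y hy
        rcases Finset.mem_insert.1 hy with rfl | hy
        · exact hord.1.1 c y haE
        · exact hord.1.2.1 c a haE b hbE y (ht y (Finset.mem_insert_of_mem hy)) h
            (hbtop y hy)
      · exact ⟨b, Finset.mem_insert_of_mem hb, fun y hy =>
          (Finset.mem_insert.1 hy).elim (fun e => e ▸ h) (hbtop y)⟩

lemma exists_R_min (hcs : I.CS x) (S : Finset (A × C))
    (hS : ∀ p ∈ S, 0 < x p.1 p.2) (hne : S.Nonempty) :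
    ∃ p ∈ S, ∀ q ∈ S, ¬ (q.1 ∈ I.elig p.2 ∧ I.Strict p.2 q.1 p.1) := by
  classical
  by_contra hcon
  push_neg at hcon
  have hstep : ∀ p : A × C, ∃ q : A × C,
      p ∈ S → q ∈ S ∧ q.1 ∈ I.elig p.2 ∧ I.Strict p.2 q.1 p.1 := by
    intro p
    by_cases hp : p ∈ S
    · obtain ⟨q, hq, h1, h2⟩ := hcon p hp
      exact ⟨q, fun _ => ⟨hq, h1, h2⟩⟩
    · exact ⟨p, fun h => absurd h hp⟩
  choose f hf using hstep
  obtain ⟨p₀, hp₀⟩ := hne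
  have hiter : ∀ i, f^[i] p₀ ∈ S := by
    intro i
    induction i with
    | zero => exact hp₀
    | succ n ihn =>
      rw [Function.iterate_succ_apply']
      exact (hf _ ihn).1
  have key : ∀ m n : ℕ, m < n → f^[m] p₀ = f^[n] p₀ → False := by
    intro m n hlt hEq
    set q : A × C := f^[m] p₀ with hq
    set j : ℕ := n - m with hj
    have hjq : f^[j] q = q := by
      rw [hq, ← Function.iterate_add_apply, hj, Nat.sub_add_cancel hlt.le]
      exact hEq.symm
    have hqmem : ∀ i, f^[i] q ∈ S := fun i => by
      rw [hq, ← Function.iterate_add_apply]; exact hiter _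
    have hqS : q ∈ S := by simpa using hqmem 0
    have hj1 : 1 ≤ j := by omega
    have hj2 : 2 ≤ j := by
      by_contra hcon2
      have hj1' : j = 1 := by omega
      have hfq : f q = q := by rw [hj1'] at hjq; simpa using hjq
      have hstr := (hf q hqS).2.2
      rw [hfq] at hstr
      exact hstr.2 hstr.1
    apply hcs
    refine ⟨j, fun i => (f^[i] q).2, fun i => (f^[i] q).1, hj2,
      ?_, ?_, ?_, ?_⟩
    · show (f^[j] q).2 = (f^[0] q).2
      rw [hjq, Function.iterate_zero_apply]
    · show (f^[j] q).1 = (f^[0] q).1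
      rw [hjq, Function.iterate_zero_apply]
    · intro i _
      refine ⟨hS _ (hqmem i), ?_⟩
      show I.prio (f^[i] q).2 (f^[i+1] q).1 (f^[i] q).1
      rw [Function.iterate_succ_apply']
      exact (hf _ (hqmem i)).2.2.1
    · refine ⟨0, by omega, ?_⟩
      show I.Strict (f^[0] q).2 (f^[0+1] q).1 (f^[0] q).1
      rw [Function.iterate_succ_apply']
      exact (hf _ (hqmem 0)).2.2
  obtain ⟨m, n, hmn, hEq⟩ := Finite.exists_ne_map_eq_of_infinite (fun i : ℕ => f^[i] p₀)
  rcases (Ne.lt_or_gt hmn) with h | h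
  · exact key m n h hEq
  · exact key n m h hEq.symm

lemma col_sum (hint : I.Integral x) (c : C) :
    ∑ a, x a c = ((Finset.univ.filter fun a => x a c = 1).card : ℝ) := by
  classical
  rw [← Finset.sum_filter_add_sum_filter_not Finset.univ (fun a => x a c = 1)
    (fun a => x a c)]
  have h1 : ∑ a ∈ Finset.univ.filter (fun a => x a c = 1), x a c
      = ((Finset.univ.filter fun a => x a c = 1).card : ℝ) := by
    rw [Finset.sum_congr rfl (fun a ha => (Finset.mem_filter.1 ha).2),
      Finset.sum_const, nsmul_eq_mul, mul_one]
  have h2 : ∑ a ∈ Finset.univ.filter (fun a => ¬ x a c = 1), x a c = 0 :=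
    Finset.sum_eq_zero (fun a ha =>
      (hint a c).resolve_right (Finset.mem_filter.1 ha).2)
  rw [h1, h2, add_zero]

open Classical in
lemma phase1 (hord : I.StrictTotalPrio) (hfe : I.Feasible x) (hpr : I.PR x)
    (hint : I.Integral x) (hcs : I.CS x) :
    ∀ (n : ℕ) (S : Finset (A × C)), S.card = n → (∀ p ∈ S, x p.1 p.2 = 1) →
    ∃ L : List C,
      (∀ c, L.count c = (S.filter (fun p => p.2 = c)).card) ∧
      I.sdRun L (fun a c => if (a, c) ∈ S then 0 else x a c) = x := by
  intro n
  induction n with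
  | zero =>
    intro S hcard _
    rw [Finset.card_eq_zero] at hcard
    subst hcard
    refine ⟨[], by simp, ?_⟩
    show (fun a c => if (a, c) ∈ (∅ : Finset (A × C)) then 0 else x a c) = x
    funext a c
    simp
  | succ n ih =>
    intro S hcard hS1
    have hne : S.Nonempty := by
      rw [← Finset.card_pos, hcard]; omega
    obtain ⟨p, hpS, hmin⟩ := exists_R_min hcs S
      (fun p hp => by rw [hS1 p hp]; norm_num) hne
    obtain ⟨a₀, c₀⟩ := p
    set s : A → C → ℝ := fun a c => if (a, c) ∈ S then 0 else x a c with hs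
    have hx0 : x a₀ c₀ = 1 := hS1 _ hpS
    have haE : a₀ ∈ I.elig c₀ := by
      by_contra h
      rw [hfe.2.1 a₀ c₀ h] at hx0
      norm_num at hx0
    have ha_unalloc : ∀ c', s a₀ c' = 0 := by
      intro c'
      by_cases hc : c' = c₀
      · subst hc; simp [hs, hpS]
      · have hz : x a₀ c' = 0 := row_zero_of_one hfe hx0 hc
        simp [hs, hz]
    have hmax : ∀ a', a' ∈ I.elig c₀ → (∀ c', s a' c' = 0) → I.prio c₀ a₀ a' := by
      intro a' ha'E hz
      rcases hord.1.2.2 c₀ a₀ haE a' ha'E with h | h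
      · exact h
      by_cases h2 : I.prio c₀ a₀ a'
      · exact h2
      have hstrict : I.Strict c₀ a' a₀ := ⟨h, h2⟩
      have hsum : ∑ c', x a' c' = 1 :=
        hpr c₀ a₀ haE a' ha'E hstrict (by rw [hx0]; norm_num)
      rcases row_cases hfe hint a' with hall | ⟨c'', hc'', -⟩
      · rw [Finset.sum_eq_zero (fun c' _ => hall c')] at hsum
        norm_num at hsum
      · have hmem : (a', c'') ∈ S := by
          have hz' := hz c''
          simp only [hs] at hz'
          by_contra hnot
          rw [if_neg hnot] at hz'
          rw [hz'] at hc''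
          norm_num at hc''
        exact absurd ⟨ha'E, hstrict⟩ (hmin (a', c'') hmem)
    have hex : ∃ a, (a ∈ I.elig c₀ ∧ ∀ c', s a c' = 0) ∧
        (∀ a', a' ∈ I.elig c₀ → (∀ c', s a' c' = 0) → I.prio c₀ a a') :=
      ⟨a₀, ⟨haE, ha_unalloc⟩, hmax⟩
    have hchoose : hex.choose = a₀ := by
      obtain ⟨⟨hwE, hwz⟩, hwmax⟩ := hex.choose_spec
      exact hord.2 c₀ _ hwE a₀ haE (hwmax a₀ haE ha_unalloc) (hmax _ hwE hwz)
    have hpS' : ∀ p ∈ S.erase (a₀, c₀), x p.1 p.2 = 1 :=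
      fun p hp => hS1 p (Finset.mem_of_mem_erase hp)
    have hcard' : (S.erase (a₀, c₀)).card = n := by
      rw [Finset.card_erase_of_mem hpS, hcard]
      omega
    obtain ⟨L', hLcount, hLrun⟩ := ih (S.erase (a₀, c₀)) hcard' hpS'
    refine ⟨c₀ :: L', ?_, ?_⟩
    · intro c
      rw [List.count_cons, hLcount c, Finset.filter_erase]
      by_cases hc : c₀ = c
      · subst hc
        have hmemf : ((a₀, c₀) : A × C) ∈ S.filter (fun p : A × C => p.2 = c₀) :=
          Finset.mem_filter.2 ⟨hpS, rfl⟩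
        have hpos := Finset.card_pos.2 ⟨_, hmemf⟩
        rw [Finset.card_erase_of_mem hmemf, if_pos (by simp)]
        omega
      · have herase : (S.filter (fun p : A × C => p.2 = c)).erase (a₀, c₀)
            = S.filter (fun p : A × C => p.2 = c) :=
          Finset.erase_eq_of_notMem (fun h => hc ((Finset.mem_filter.1 h).2))
        rw [herase, if_neg (by simp [hc]), add_zero]
    · rw [sdRun, dif_pos hex]
      refine Eq.trans (congrArg (I.sdRun L') ?_) hLrun
      funext a c
      rw [hchoose]
      by_cases h1 : a = a₀ ∧ c = c₀
      · obtain ⟨rfl, rfl⟩ := h1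
        rw [if_pos ⟨rfl, rfl⟩, if_neg (fun h => (Finset.mem_erase.1 h).1 rfl), hx0]
      · rw [if_neg h1]
        have hne2 : ((a, c) : A × C) ≠ (a₀, c₀) := by
          intro h
          exact h1 ⟨congrArg Prod.fst h, congrArg Prod.snd h⟩
        simp only [hs, Finset.mem_erase, hne2, true_and, ne_eq, not_false_iff]

lemma noLeftover (hord : I.StrictTotalPrio) (hfe : I.Feasible x) (hpr : I.PR x)
    (hpe : I.PE x) (hint : I.Integral x) (c : C)
    (hq : ∑ a, x a c < (I.quota c : ℝ)) :
    ¬ ∃ a, a ∈ I.elig c ∧ ∀ c', x a c' = 0 := by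
  classical
  rintro ⟨a, haE, haz⟩
  set U : Finset A := Finset.univ.filter (fun b => b ∈ I.elig c ∧ ∀ c', x b c' = 0)
    with hU
  have haU : a ∈ U := by simp [hU, haE, haz]
  obtain ⟨a₀, ha₀U, htop⟩ := exists_top hord c U
    (fun b hb => (Finset.mem_filter.1 hb).2.1) ⟨a, haU⟩
  obtain ⟨ha₀E, ha₀z⟩ := (Finset.mem_filter.1 ha₀U).2
  set y : A → C → ℝ := fun b c' => if b = a₀ ∧ c' = c then 1 else x b c' with hy
  have hysum : ∀ b, b ≠ a₀ → ∑ c', y b c' = ∑ c', x b c' := by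
    intro b hb
    exact Finset.sum_congr rfl (fun c' _ => by simp [hy, hb])
  have hyval : ∀ c', y a₀ c' = if c' = c then 1 else 0 := by
    intro c'
    by_cases h : c' = c <;> simp [hy, h, ha₀z c']
  have hysuma₀ : ∑ c', y a₀ c' = 1 := by
    rw [Finset.sum_congr rfl (fun c' _ => hyval c')]
    simp
  have hxa₀sum : ∑ c', x a₀ c' = 0 := Finset.sum_eq_zero (fun c' _ => ha₀z c')
  have hcolsum : ∑ b, y b c = (∑ b, x b c) + 1 := by
    have hterm : ∀ b, y b c = x b c + (if b = a₀ then 1 else 0) := by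
      intro b
      by_cases hb : b = a₀
      · subst hb; simp [hy, ha₀z c]
      · simp [hy, hb]
    rw [Finset.sum_congr rfl (fun b _ => hterm b), Finset.sum_add_distrib]
    simp
  have hcolnat : ∑ b, x b c = ((Finset.univ.filter fun b => x b c = 1).card : ℝ) :=
    col_sum hint c
  have hq1 : (∑ b, x b c) + 1 ≤ (I.quota c : ℝ) := by
    rw [hcolnat] at hq ⊢
    have hlt : (Finset.univ.filter fun b => x b c = 1).card < I.quota c := by
      exact_mod_cast hq
    have h2 : (Finset.univ.filter fun b => x b c = 1).card + 1 ≤ I.quota c := hlt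
    exact_mod_cast h2
  have hyfe : I.Feasible y := by
    refine ⟨?_, ?_, ?_, ?_⟩
    · intro b c'
      by_cases h : b = a₀ ∧ c' = c
      · rw [hy]; simp only; rw [if_pos h]; norm_num
      · rw [hy]; simp only; rw [if_neg h]; exact hfe.1 b c'
    · intro b c' hb
      by_cases h : b = a₀ ∧ c' = c
      · obtain ⟨rfl, rfl⟩ := h
        exact absurd ha₀E hb
      · rw [hy]; simp only; rw [if_neg h]; exact hfe.2.1 b c' hb
    · intro c'
      by_cases hc' : c' = c
      · subst hc'
        rw [hcolsum]
        exact hq1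
      · have h3 : ∑ b, y b c' = ∑ b, x b c' :=
          Finset.sum_congr rfl (fun b _ => by simp [hy, hc'])
        rw [h3]
        exact hfe.2.2.1 c'
    · intro b
      by_cases hb : b = a₀
      · subst hb; rw [hysuma₀]
      · rw [hysum b hb]; exact hfe.2.2.2 b
  have hypr : I.PR y := by
    intro c'' b hbE b' hb'E hstr hpos
    by_cases hcase : b = a₀ ∧ c'' = c
    · obtain ⟨hb0, hc0⟩ := hcase
      have hb'sum : ∑ c', x b' c' = 1 := by
        rcases row_cases hfe hint b' with hall | ⟨cc, hcc, hsum⟩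
        · exfalso
          apply hstr.2
          rw [hb0, hc0]
          have hb'E2 : b' ∈ I.elig c := hc0 ▸ hb'E
          exact htop b' (Finset.mem_filter.2 ⟨Finset.mem_univ _, hb'E2, hall⟩)
        · exact hsum
      have hb'ne : b' ≠ a₀ := by
        intro h
        rw [h, hxa₀sum] at hb'sum
        norm_num at hb'sum
      rw [hysum b' hb'ne]
      exact hb'sum
    · have hpos' : 0 < x b c'' := by
        have h4 : y b c'' = x b c'' := by rw [hy]; simp only; rw [if_neg hcase]
        rwa [h4] at hpos
      have hsum := hpr c'' b hbE b' hb'E hstr hpos'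
      have hb'ne : b' ≠ a₀ := by
        intro h
        rw [h, hxa₀sum] at hsum
        norm_num at hsum
      rw [hysum b' hb'ne]
      exact hsum
  refine hpe ⟨y, hyfe, hypr, ?_, ⟨a₀, ?_⟩⟩
  · intro b
    by_cases hb : b = a₀
    · subst hb
      rw [hysuma₀, hxa₀sum]
      norm_num
    · rw [hysum b hb]
  · rw [hysuma₀, hxa₀sum]
    norm_num

end Aux

end AllocInstance

lemma count_flatMap_replicate {C : Type*} [DecidableEq C] (n : C → ℕ) (l : List C)
    (hnd : l.Nodup) (c : C) (hc : c ∈ l) :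
    (l.flatMap fun c' => List.replicate (n c') c').count c = n c := by
  induction l with
  | nil => cases hc
  | cons b t ih =>
    rw [List.flatMap_cons, List.count_append, List.count_replicate]
    rcases List.mem_cons.1 hc with rfl | hct
    · have hnotmem : c ∉ t := (List.nodup_cons.1 hnd).1
      have hz : (t.flatMap fun c' => List.replicate (n c') c').count c = 0 := by
        rw [List.count_eq_zero]
        intro hmem
        obtain ⟨c', hc't, hcmem⟩ := List.mem_flatMap.1 hmem
        rw [List.eq_of_mem_replicate hcmem] at hnotmem
        exact hnotmem hc't
      rw [if_pos (by simp), hz, add_zero]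
    · have hbc : b ≠ c := by
        rintro rfl
        exact (List.nodup_cons.1 hnd).1 hct
      rw [if_neg (by simp [hbc]), ih (List.nodup_cons.1 hnd).2 hct, zero_add]


/-- every valid integral allocation satisfying category stability (CS)
is the serial dictatorship allocation `x_σ` for some choice order `σ`. -/
theorem stmt11 {A C : Type*} [Fintype A] [Fintype C] [DecidableEq C]
    (I : AllocInstance A C) (hord : I.StrictTotalPrio)
    (x : A → C → ℝ) (hval : I.Valid x) (hint : I.Integral x) (hcs : I.CS x) :
    ∃ σ : List C, (∀ c, σ.count c = I.quota c) ∧ x = I.sdAlloc σ := by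
  classical
  obtain ⟨hfe, hpr, hpe⟩ := hval
  set S₀ : Finset (A × C) := Finset.univ.filter (fun p => x p.1 p.2 = 1) with hS₀
  have hS₀1 : ∀ p ∈ S₀, x p.1 p.2 = 1 := fun p hp => (Finset.mem_filter.1 hp).2
  obtain ⟨L, hLcount, hLrun⟩ :=
    AllocInstance.phase1 hord hfe hpr hint hcs S₀.card S₀ rfl hS₀1
  have hLrun' : I.sdRun L (fun _ _ => (0 : ℝ)) = x := by
    convert hLrun using 2
    funext a c
    by_cases h : (a, c) ∈ S₀
    · rw [if_pos h]
    · rw [if_neg h]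
      refine ((hint a c).resolve_right (fun h1 => h ?_)).symm
      rw [hS₀]
      exact Finset.mem_filter.2 ⟨Finset.mem_univ _, h1⟩
  set k : C → ℕ := fun c => (Finset.univ.filter fun a => x a c = 1).card with hk
  have hfiltcard : ∀ c, (S₀.filter fun p : A × C => p.2 = c).card = k c := by
    intro c
    rw [hk]
    apply Finset.card_bij (fun (p : A × C) _ => p.1)
    · intro p hp
      obtain ⟨hp1, hp2⟩ := Finset.mem_filter.1 hp
      have := (Finset.mem_filter.1 hp1).2
      rw [hp2] at this
      exact Finset.mem_filter.2 ⟨Finset.mem_univ _, this⟩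
    · intro p hp q hq hpq
      have hp2 := (Finset.mem_filter.1 hp).2
      have hq2 := (Finset.mem_filter.1 hq).2
      exact Prod.ext hpq (hp2.trans hq2.symm)
    · intro a ha
      have h1 := (Finset.mem_filter.1 ha).2
      refine ⟨(a, c), ?_, rfl⟩
      exact Finset.mem_filter.2 ⟨Finset.mem_filter.2 ⟨Finset.mem_univ _, h1⟩, rfl⟩
  have hcol : ∀ c, ∑ a, x a c = (k c : ℝ) := fun c => AllocInstance.col_sum hint c
  have hkq : ∀ c, k c ≤ I.quota c := by
    intro c
    have h := hfe.2.2.1 c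
    rw [hcol c] at h
    exact_mod_cast h
  set pad : List C :=
    Finset.univ.toList.flatMap (fun c => List.replicate (I.quota c - k c) c) with hpad
  have hpadcount : ∀ c, pad.count c = I.quota c - k c := by
    intro c
    rw [hpad]
    exact count_flatMap_replicate _ _ (Finset.nodup_toList _) c (by simp)
  have hpadmem : ∀ c ∈ pad, k c < I.quota c := by
    intro c hcmem
    rw [hpad] at hcmem
    obtain ⟨c', _, hrep⟩ := List.mem_flatMap.1 hcmem
    obtain ⟨hn, rfl⟩ := List.mem_replicate.1 hrep
    omega
  refine ⟨L ++ pad, ?_, ?_⟩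
  · intro c
    rw [List.count_append, hLcount c, hfiltcard c, hpadcount c]
    have := hkq c
    omega
  · have hrun : I.sdAlloc (L ++ pad) = x := by
      rw [AllocInstance.sdAlloc, AllocInstance.sdRun_appnd, hLrun',
        AllocInstance.sdRun_skip]
      intro c hcp
      exact AllocInstance.noLeftover hord hfe hpr hpe hint c
        (by rw [hcol c]; exact_mod_cast hpadmem c hcp)
    exact hrun.symm
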